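/- Let Φ ∈ C²(ℝ) be a positive even solution of -Φ'' + aΦ + (c/2)Φ³ - (3γ/16)Φ⁵ = 0 decaying at infinity together with its derivatives. If f ∈ H²(ℝ) satisfies L₁₁ f = 0, where L₁₁ f := -f'' + a f + (3c/2)Φ² f - (15γ/16)Φ⁴ f, then f is a scalar multiple of Φ'. -/

import Mathlib

open Real MeasureTheory Filter Set

/-- Gronwall-type uniqueness for `g'' = q g` with zero initial data, forward direction. -/
lemma gronwall_zero_ge (g g' q : ℝ → ℝ) (hq : Continuous q)
    (hg : ∀ t, HasDerivAt g (g' t) t)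
    (hg' : ∀ t, HasDerivAt g' (q t * g t) t)
    (x₀ : ℝ) (h0 : g x₀ = 0) (h0' : g' x₀ = 0) :
    ∀ x, x₀ ≤ x → g x = 0 := by
  intro x hx
  obtain ⟨C, hC⟩ := (isCompact_Icc (a := x₀) (b := x)).exists_bound_of_continuousOn
    hq.continuousOn
  have hC0 : 0 ≤ C := le_trans (norm_nonneg _) (hC x₀ ⟨le_refl _, hx⟩)
  set C' : ℝ := C + 1 with hC'
  set h : ℝ → ℝ := fun t => g t ^ 2 + g' t ^ 2 with hh
  set F : ℝ → ℝ := fun t => Real.exp (-C' * t) * h t with hF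
  have hhd : ∀ t, HasDerivAt h (2 * g t * g' t * (1 + q t)) t := by
    intro t
    have := ((hg t).fun_pow 2).add ((hg' t).fun_pow 2)
    exact this.congr_deriv (by ring)
  have hFd : ∀ t, HasDerivAt F
      (Real.exp (-C' * t) * (2 * g t * g' t * (1 + q t) - C' * h t)) t := by
    intro t
    have h1 : HasDerivAt (fun t : ℝ => Real.exp (-C' * t)) (-C' * Real.exp (-C' * t)) t := by
      have h2 := ((hasDerivAt_id t).const_mul (-C')).exp
      simp only [id_eq] at h2
      convert h2 using 1
      ring
    have := h1.fun_mul (hhd t)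
    exact this.congr_deriv (by ring)
  have hF0 : ∀ t ∈ interior (Icc x₀ x), deriv F t ≤ 0 := by
    intro t ht
    rw [(hFd t).deriv]
    have ht' : t ∈ Icc x₀ x := interior_subset ht
    have hqb : |q t| ≤ C := by simpa using hC t ht'
    have hq1 : |1 + q t| ≤ C' := by
      rw [abs_le] at hqb ⊢
      constructor <;> [linarith; linarith]
    have habs : |2 * g t * g' t| ≤ h t := by
      simp only [hh]
      rw [abs_le]
      constructor
      · nlinarith [sq_nonneg (g t + g' t)]
      · nlinarith [sq_nonneg (g t - g' t)]
    have hht : 0 ≤ h t := by simp only [hh]; positivity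
    have h1 : 2 * g t * g' t * (1 + q t) ≤ C' * h t :=
      calc 2 * g t * g' t * (1 + q t) ≤ |2 * g t * g' t * (1 + q t)| := le_abs_self _
        _ = |2 * g t * g' t| * |1 + q t| := abs_mul _ _
        _ ≤ h t * C' := mul_le_mul habs hq1 (abs_nonneg _) hht
        _ = C' * h t := mul_comm _ _
    have hexp : 0 < Real.exp (-C' * t) := Real.exp_pos _
    exact mul_nonpos_of_nonneg_of_nonpos hexp.le (by linarith)
  have hmono : AntitoneOn F (Icc x₀ x) := by
    refine antitoneOn_of_deriv_nonpos (convex_Icc _ _) ?_ ?_ hF0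
    · have hgd : Differentiable ℝ g := fun t => (hg t).differentiableAt
      have hgd' : Differentiable ℝ g' := fun t => (hg' t).differentiableAt
      have hgc : Continuous g := hgd.continuous
      have hgc' : Continuous g' := hgd'.continuous
      have hhc : Continuous h := by rw [hh]; fun_prop
      have : Continuous F := by rw [hF]; fun_prop
      exact this.continuousOn
    · exact fun t _ => ((hFd t).differentiableAt).differentiableWithinAt
  have hle : F x ≤ F x₀ := hmono ⟨le_refl _, hx⟩ ⟨hx, le_refl _⟩ hx
  have hFx0 : F x₀ = 0 := by simp [hF, hh, h0, h0']
  have hhx : 0 ≤ h x := by simp only [hh]; positivity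
  have hexp : 0 < Real.exp (-C' * x) := Real.exp_pos _
  have hFx : F x = Real.exp (-C' * x) * h x := by rw [hF]
  have hzero : h x = 0 := by
    rcases eq_or_lt_of_le hhx with he | hlt
    · exact he.symm
    · exfalso
      have h2 : (0 : ℝ) < F x := by rw [hFx]; exact mul_pos hexp hlt
      linarith [hle.trans_eq hFx0]
  simp only [hh] at hzero
  nlinarith [sq_nonneg (g x), sq_nonneg (g' x)]

/-- Gronwall-type uniqueness for `g'' = q g` with zero initial data. -/
lemma gronwall_zero (g g' q : ℝ → ℝ) (hq : Continuous q)
    (hg : ∀ t, HasDerivAt g (g' t) t)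
    (hg' : ∀ t, HasDerivAt g' (q t * g t) t)
    (x₀ : ℝ) (h0 : g x₀ = 0) (h0' : g' x₀ = 0) :
    ∀ x, g x = 0 := by
  intro x
  rcases le_total x₀ x with hx | hx
  · exact gronwall_zero_ge g g' q hq hg hg' x₀ h0 h0' x hx
  · have hr : ∀ t : ℝ, HasDerivAt (fun s : ℝ => 2 * x₀ - s) (-1) t := by
      intro t
      simpa using (hasDerivAt_id t).const_sub (2 * x₀)
    have hg1 : ∀ t, HasDerivAt (fun s => g (2 * x₀ - s)) (-g' (2 * x₀ - t)) t := by
      intro t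
      have := (hg (2 * x₀ - t)).comp t (hr t)
      simpa [mul_comm, Function.comp_def] using this
    have hg2 : ∀ t, HasDerivAt (fun s => -g' (2 * x₀ - s))
        ((fun s => q (2 * x₀ - s)) t * (fun s => g (2 * x₀ - s)) t) t := by
      intro t
      have := ((hg' (2 * x₀ - t)).comp t (hr t)).fun_neg
      exact this.congr_deriv (by ring)
    have hqc : Continuous fun s : ℝ => q (2 * x₀ - s) := hq.comp (by fun_prop)
    have key := gronwall_zero_ge (fun s => g (2 * x₀ - s)) (fun s => -g' (2 * x₀ - s))
      (fun s => q (2 * x₀ - s)) hqc hg1 hg2 x₀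
      (by simp only [show 2 * x₀ - x₀ = x₀ from by ring]; exact h0)
      (by simp only [show 2 * x₀ - x₀ = x₀ from by ring, h0', neg_zero]) (2 * x₀ - x) (by linarith)
    simpa using key

/-- Nondegeneracy of the kernel of `L₁₁ = -∂ₓ² + a + (3c/2)Φ² - (15γ/16)Φ⁴`:
any `H²` kernel element is a multiple of `Φ'`. -/
theorem stmt3 (a c γ : ℝ) (ha : 0 < a) (Φ f : ℝ → ℝ)
    (hΦpos : ∀ x, 0 < Φ x) (hΦeven : ∀ x, Φ (-x) = Φ x) (hΦC2 : ContDiff ℝ 2 Φ)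
    (hΦ0 : Tendsto Φ atTop (nhds 0)) (hΦ0' : Tendsto Φ atBot (nhds 0))
    (hΦ'0 : Tendsto (deriv Φ) atTop (nhds 0)) (hΦ'0' : Tendsto (deriv Φ) atBot (nhds 0))
    (hΦ''0 : Tendsto (deriv (deriv Φ)) atTop (nhds 0))
    (hΦ''0' : Tendsto (deriv (deriv Φ)) atBot (nhds 0))
    (hΦeq : ∀ x, -deriv (deriv Φ) x + a * Φ x + (c / 2) * Φ x ^ 3
      - (3 * γ / 16) * Φ x ^ 5 = 0)
    (hfC2 : ContDiff ℝ 2 f)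
    (hfL2 : Integrable (fun x => f x ^ 2)) (hf'L2 : Integrable (fun x => deriv f x ^ 2))
    (hf0 : Tendsto f atTop (nhds 0)) (hf0' : Tendsto f atBot (nhds 0))
    (hf'0 : Tendsto (deriv f) atTop (nhds 0)) (hf'0' : Tendsto (deriv f) atBot (nhds 0))
    (hfeq : ∀ x, -deriv (deriv f) x + a * f x + (3 * c / 2) * Φ x ^ 2 * f x
      - (15 * γ / 16) * Φ x ^ 4 * f x = 0) :
    ∃ k : ℝ, ∀ x, f x = k * deriv Φ x := by
  -- basic differentiability
  have hΦd : Differentiable ℝ Φ := hΦC2.differentiable (by norm_num)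
  have hfd : Differentiable ℝ f := hfC2.differentiable (by norm_num)
  have hΦ2 : ContDiff ℝ 2 Φ := hΦC2
  have hΦderiv : ContDiff ℝ 1 (deriv Φ) := by
    have := (contDiff_succ_iff_deriv (n := 1)).mp (by exact_mod_cast hΦC2)
    exact this.2.2
  have hfderiv : ContDiff ℝ 1 (deriv f) := by
    have := (contDiff_succ_iff_deriv (n := 1)).mp (by exact_mod_cast hfC2)
    exact this.2.2
  have hψd : Differentiable ℝ (deriv Φ) := hΦderiv.differentiable (by norm_num)
  have hfd' : Differentiable ℝ (deriv f) := hfderiv.differentiable (by norm_num)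
  -- the potential
  set q : ℝ → ℝ := fun x => a + (3 * c / 2) * Φ x ^ 2 - (15 * γ / 16) * Φ x ^ 4 with hqdef
  have hqc : Continuous q := by
    have := hΦC2.continuous
    rw [hqdef]; fun_prop
  -- second derivative of Φ as a nice function
  set A : ℝ → ℝ := fun x => a * Φ x + (c / 2) * Φ x ^ 3 - (3 * γ / 16) * Φ x ^ 5 with hAdef
  have hA : deriv (deriv Φ) = A := by
    funext x
    have := hΦeq x
    rw [hAdef]
    linarith
  -- Φ' satisfies the linearized equation: (Φ')'' = q Φ'
  have hψ' : ∀ x, HasDerivAt (deriv Φ) (A x) x := by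
    intro x
    have := (hψd x).hasDerivAt
    rwa [show deriv (deriv Φ) x = A x from by rw [hA]] at this
  have hA' : ∀ x, HasDerivAt A (q x * deriv Φ x) x := by
    intro x
    have hΦx : HasDerivAt Φ (deriv Φ x) x := (hΦd x).hasDerivAt
    have h1 : HasDerivAt A
        (a * deriv Φ x + (c / 2) * (3 * Φ x ^ 2 * deriv Φ x)
          - (3 * γ / 16) * (5 * Φ x ^ 4 * deriv Φ x)) x := by
      rw [hAdef]
      exact ((hΦx.const_mul a).add (((hΦx.pow 3).const_mul (c / 2)))).sub
        ((hΦx.pow 5).const_mul (3 * γ / 16)) |>.congr_deriv (by push_cast; ring)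
    convert h1 using 1
    rw [hqdef]
    ring
  -- f satisfies f'' = q f
  have hf'' : ∀ x, deriv (deriv f) x = q x * f x := by
    intro x
    have := hfeq x
    rw [hqdef]
    linarith
  have hf' : ∀ x, HasDerivAt f (deriv f x) x := fun x => (hfd x).hasDerivAt
  have hf'at : ∀ x, HasDerivAt (deriv f) (q x * f x) x := by
    intro x
    have := (hfd' x).hasDerivAt
    rwa [hf'' x] at this
  -- the Wronskian W = A f - Φ' f' is constant with limit 0, hence ≡ 0
  set W : ℝ → ℝ := fun x => A x * f x - deriv Φ x * deriv f x with hWdef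
  have hW : ∀ x, HasDerivAt W 0 x := by
    intro x
    have := ((hA' x).mul (hf' x)).sub ((hψ' x).mul (hf'at x))
    exact this.congr_deriv (by ring)
  have hWconst : ∀ x y, W x = W y :=
    is_const_of_deriv_eq_zero (fun x => (hW x).differentiableAt) (fun x => (hW x).deriv)
  have hAtend : Tendsto A atTop (nhds 0) := hA ▸ hΦ''0
  have hWtend : Tendsto W atTop (nhds 0) := by
    have := (hAtend.mul hf0).sub (hΦ'0.mul hf'0)
    simpa using this
  have hW0 : ∀ x, W x = 0 := by
    intro x
    have h1 : Tendsto W atTop (nhds (W x)) := by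
      have : W = fun _ => W x := funext fun y => hWconst y x
      rw [this]
      exact tendsto_const_nhds
    exact tendsto_nhds_unique h1 hWtend
  -- Φ' is nontrivial
  have hψne : ∃ x₀, deriv Φ x₀ ≠ 0 := by
    by_contra hcon
    push_neg at hcon
    have hconst : ∀ x, Φ x = Φ 0 := fun x => is_const_of_deriv_eq_zero hΦd hcon x 0
    have h1 : Tendsto Φ atTop (nhds (Φ 0)) := by
      have : Φ = fun _ => Φ 0 := funext hconst
      rw [this]; exact tendsto_const_nhds
    have := tendsto_nhds_unique h1 hΦ0
    exact absurd this (ne_of_gt (hΦpos 0))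
  obtain ⟨x₀, hx₀⟩ := hψne
  set k : ℝ := f x₀ / deriv Φ x₀ with hkdef
  refine ⟨k, fun x => ?_⟩
  -- g = f - k Φ' satisfies g'' = q g with zero data at x₀
  have hg : ∀ t, HasDerivAt (fun s => f s - k * deriv Φ s)
      ((fun s => deriv f s - k * A s) t) t := fun t => (hf' t).sub ((hψ' t).const_mul k)
  have hg' : ∀ t, HasDerivAt (fun s => deriv f s - k * A s)
      (q t * (f t - k * deriv Φ t)) t := by
    intro t
    have := (hf'at t).sub ((hA' t).const_mul k)
    exact this.congr_deriv (by ring)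
  have h0 : f x₀ - k * deriv Φ x₀ = 0 := by
    rw [hkdef]
    field_simp
    ring
  have h0' : deriv f x₀ - k * A x₀ = 0 := by
    have hw : A x₀ * f x₀ - deriv Φ x₀ * deriv f x₀ = 0 := hW0 x₀
    rw [hkdef]
    field_simp
    linear_combination -hw
  have := gronwall_zero (fun s => f s - k * deriv Φ s) (fun s => deriv f s - k * A s)
    q hqc hg hg' x₀ h0 h0' x
  linarith [this]
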